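/- arXiv:2408.03153 — 2 statements merged into one kernel-verified Lean document; each statement's English description precedes it below -/
import Mathlib

section
/- Let α be a real number that is κ-Diophantine for some κ ≥ 1, i.e., there exists c > 0 with |qα − p| ≥ c/q^κ for all positive integers q and integers p. Then there is a constant C (depending on α and κ) such that for all real T ≥ 1 and M ≥ 1, Σ_{m=1}^{⌊MT⌋} min(1/‖mα‖, T) ≤ C (M T^{2−1/κ} + M T log T), where ‖x‖ is the distance from x to the nearest integer. -/
open Finset

/-- distance from `x` to the nearest integer -/
noncomputable def dni (x : ℝ) : ℝ := |x - round x|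

/-- `min (1/‖y‖, T)` with the convention that this is `T` when `‖y‖ = 0`. -/
noncomputable def minInv (y T : ℝ) : ℝ := if dni y = 0 then T else min (1 / dni y) T

lemma dni_nonneg (x : ℝ) : 0 ≤ dni x := abs_nonneg _

lemma dni_le_half (x : ℝ) : dni x ≤ 1 / 2 := abs_sub_round x

lemma dni_le (x : ℝ) (p : ℤ) : dni x ≤ |x - p| := round_le x p

lemma dni_sub (x y : ℝ) : dni (x - y) ≤ dni x + dni y := by
  calc dni (x - y) ≤ |(x - y) - ((round x - round y : ℤ) : ℝ)| := dni_le _ _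
    _ = |(x - round x) - (y - round y)| := by push_cast; ring_nf
    _ ≤ |x - round x| + |y - round y| := abs_sub _ _
    _ = dni x + dni y := rfl

lemma count_le (c κ α : ℝ) (hc : 0 < c) (hκ : 1 ≤ κ)
    (hdio : ∀ q : ℕ, 0 < q → ∀ p : ℤ, c / (q : ℝ) ^ κ ≤ |(q : ℝ) * α - (p : ℝ)|)
    (N : ℕ) (t : ℝ) (ht : 0 < t) :
    (((Icc 1 N).filter fun m : ℕ => dni ((m : ℝ) * α) ≤ t).card : ℝ)
      ≤ N * (2 * t / c) ^ (1 / κ) + 1 := by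
  have hκ0 : (0:ℝ) < κ := lt_of_lt_of_le one_pos hκ
  set g : ℝ := (c / (2 * t)) ^ (1 / κ) with hg
  have hg0 : 0 < g := Real.rpow_pos_of_pos (by positivity) _
  set S := (Icc 1 N).filter fun m : ℕ => dni ((m : ℝ) * α) ≤ t with hS
  have hsep : ∀ m ∈ S, ∀ m' ∈ S, m < m' → g ≤ (m' : ℝ) - m := by
    intro m hm m' hm' hlt
    simp only [hS, mem_filter, mem_Icc] at hm hm'
    set q : ℕ := m' - m with hq
    have hq0 : 0 < q := by omega
    have hqc : ((q : ℝ)) = (m' : ℝ) - m := by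
      rw [hq, Nat.cast_sub hlt.le]
    have h1 : dni ((q : ℝ) * α) ≤ 2 * t := by
      have he : (q : ℝ) * α = (m' : ℝ) * α - (m : ℝ) * α := by rw [hqc]; ring
      rw [he]
      calc dni ((m' : ℝ) * α - (m : ℝ) * α) ≤ dni ((m' : ℝ) * α) + dni ((m : ℝ) * α) :=
            dni_sub _ _
        _ ≤ t + t := add_le_add hm'.2 hm.2
        _ = 2 * t := by ring
    have h2 : c / (q : ℝ) ^ κ ≤ 2 * t := le_trans (hdio q hq0 (round ((q : ℝ) * α))) h1
    have hqR : (0:ℝ) < (q:ℝ) := by exact_mod_cast hq0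
    have hqpos : (0:ℝ) < (q : ℝ) ^ κ := Real.rpow_pos_of_pos hqR _
    have h3 : c / (2 * t) ≤ (q : ℝ) ^ κ := by
      rw [div_le_iff₀ (by positivity)] at h2 ⊢
      nlinarith
    have h4 : g ≤ ((q : ℝ) ^ κ) ^ (1 / κ) :=
      Real.rpow_le_rpow (by positivity) h3 (by positivity)
    have h5 : ((q : ℝ) ^ κ) ^ (1 / κ) = (q : ℝ) := by
      rw [← Real.rpow_mul hqR.le, mul_one_div_cancel hκ0.ne', Real.rpow_one]
    rw [h5] at h4; rw [← hqc]; exact h4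
  have hmono : ∀ m ∈ S, ∀ m' ∈ S, m < m' → ⌊(m : ℝ) / g⌋₊ < ⌊(m' : ℝ) / g⌋₊ := by
    intro m hm m' hm' hlt
    have h1 : (m : ℝ) / g + 1 ≤ (m' : ℝ) / g := by
      rw [div_add' _ _ _ hg0.ne', div_le_div_iff_of_pos_right hg0]
      linarith [hsep m hm m' hm' hlt]
    calc ⌊(m : ℝ) / g⌋₊ < ⌊(m : ℝ) / g⌋₊ + 1 := Nat.lt_succ_self _
      _ = ⌊(m : ℝ) / g + 1⌋₊ := (Nat.floor_add_one (by positivity)).symm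
      _ ≤ ⌊(m' : ℝ) / g⌋₊ := Nat.floor_le_floor h1
  have hcard : S.card ≤ ⌊(N : ℝ) / g⌋₊ + 1 := by
    have h := Finset.card_le_card_of_injOn (fun m : ℕ => ⌊(m : ℝ) / g⌋₊)
      (s := S) (t := range (⌊(N : ℝ) / g⌋₊ + 1)) ?_ ?_
    · simpa using h
    · intro m hm
      have hmN : m ≤ N := by
        have := (mem_filter.mp hm).1; exact (mem_Icc.mp this).2
      rw [Finset.mem_coe, mem_range, Nat.lt_succ_iff]
      exact Nat.floor_le_floor (by gcongr ?_ / g; exact Nat.cast_le.mpr hmN)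
    · intro m hm m' hm' hfe
      by_contra hne
      rcases lt_or_gt_of_ne hne with h | h
      · exact absurd hfe (Nat.ne_of_lt (hmono m hm m' hm' h))
      · exact absurd hfe.symm (Nat.ne_of_lt (hmono m' hm' m hm h))
  have hginv : g⁻¹ = (2 * t / c) ^ (1 / κ) := by
    rw [hg, ← Real.inv_rpow (by positivity)]
    congr 1
    field_simp
  calc (S.card : ℝ) ≤ (⌊(N : ℝ) / g⌋₊ : ℝ) + 1 := by exact_mod_cast hcard
    _ ≤ (N : ℝ) / g + 1 := by
        have := Nat.floor_le (R := ℝ) (a := (N : ℝ) / g) (by positivity)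
        linarith
    _ = N * (2 * t / c) ^ (1 / κ) + 1 := by rw [div_eq_mul_inv, hginv]

lemma minInv_pointwise (y T : ℝ) (hT : 1 ≤ T) :
    minInv y T ≤ (if dni y ≤ 1 / T then T else 0)
      + ∑ k ∈ range (⌊Real.logb 2 T⌋₊ + 1),
          (if dni y ≤ ((2:ℝ) ^ k)⁻¹ then (2:ℝ) ^ (k + 1) else 0) := by
  have hT0 : (0:ℝ) < T := lt_of_lt_of_le one_pos hT
  set d := dni y with hd
  have hd0 : 0 ≤ d := dni_nonneg y
  have hdh : d ≤ 1 / 2 := dni_le_half y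
  have hsum_nonneg : (0:ℝ) ≤ ∑ k ∈ range (⌊Real.logb 2 T⌋₊ + 1),
      (if d ≤ ((2:ℝ) ^ k)⁻¹ then (2:ℝ) ^ (k + 1) else 0) := by
    apply Finset.sum_nonneg
    intro k _
    split <;> positivity
  by_cases hcase : d ≤ 1 / T
  · rw [if_pos hcase]
    have h1 : minInv y T ≤ T := by
      unfold minInv
      split
      · exact le_refl _
      · exact min_le_right _ _
    linarith
  · rw [if_neg hcase]
    push_neg at hcase
    have hdpos : 0 < d := lt_trans (by positivity) hcase
    have h1d : (2:ℝ) ≤ 1 / d := by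
      rw [le_div_iff₀ hdpos]; linarith
    have h1d1 : (1:ℝ) ≤ 1 / d := by linarith
    have hlog0 : 0 ≤ Real.logb 2 (1 / d) := Real.logb_nonneg one_lt_two h1d1
    set k0 := ⌊Real.logb 2 (1 / d)⌋₊ with hk0
    have hrp : (2:ℝ) ^ (Real.logb 2 (1 / d)) = 1 / d :=
      Real.rpow_logb (by norm_num) (by norm_num) (by positivity)
    have ha : (2:ℝ) ^ k0 ≤ 1 / d := by
      calc (2:ℝ) ^ k0 = (2:ℝ) ^ ((k0:ℝ)) := (Real.rpow_natCast 2 k0).symm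
        _ ≤ (2:ℝ) ^ (Real.logb 2 (1 / d)) :=
            Real.rpow_le_rpow_of_exponent_le one_le_two (Nat.floor_le hlog0)
        _ = 1 / d := hrp
    have ha' : d ≤ ((2:ℝ) ^ k0)⁻¹ := by
      have h := inv_anti₀ (by positivity : (0:ℝ) < (2:ℝ)^k0) ha
      rwa [one_div, inv_inv] at h
    have hb : 1 / d ≤ (2:ℝ) ^ (k0 + 1) := by
      calc 1 / d = (2:ℝ) ^ (Real.logb 2 (1 / d)) := hrp.symm
        _ ≤ (2:ℝ) ^ (((k0 + 1 : ℕ)):ℝ) := by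
            apply Real.rpow_le_rpow_of_exponent_le one_le_two
            push_cast
            exact (Nat.lt_floor_add_one _).le
        _ = (2:ℝ) ^ (k0 + 1) := Real.rpow_natCast 2 (k0 + 1)
    have hc : k0 ∈ range (⌊Real.logb 2 T⌋₊ + 1) := by
      rw [mem_range, Nat.lt_succ_iff, hk0]
      apply Nat.floor_le_floor
      have h1dT : 1 / d ≤ T := by
        rw [div_le_iff₀ hdpos]
        nlinarith [(div_lt_iff₀ hT0).mp hcase]
      exact Real.logb_le_logb_of_le one_lt_two (by positivity) h1dT
    have hsingle : (2:ℝ) ^ (k0 + 1) ≤ ∑ k ∈ range (⌊Real.logb 2 T⌋₊ + 1),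
        (if d ≤ ((2:ℝ) ^ k)⁻¹ then (2:ℝ) ^ (k + 1) else 0) := by
      have h := Finset.single_le_sum (f := fun k : ℕ =>
          (if d ≤ ((2:ℝ) ^ k)⁻¹ then (2:ℝ) ^ (k + 1) else 0))
        (fun k _ => by beta_reduce; split <;> positivity) hc
      rwa [if_pos ha'] at h
    have hmi : minInv y T ≤ 1 / d := by
      unfold minInv
      rw [if_neg hdpos.ne']
      exact min_le_left _ _
    linarith

lemma geom_aux (κ : ℝ) (hκ : 1 ≤ κ) : ∃ D > 0, ∀ (K : ℕ) (T : ℝ), 1 ≤ T → (2:ℝ)^K ≤ T →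
    ∑ k ∈ range (K+1), (2:ℝ) ^ ((k:ℝ) * (1 - 1/κ)) ≤ D * (T ^ (1 - 1/κ) + Real.log T + 1) := by
  rcases eq_or_lt_of_le hκ with h1 | h1
  · refine ⟨2, by norm_num, ?_⟩
    intro K T hT h2K
    have hθ : 1 - 1/κ = 0 := by rw [← h1]; norm_num
    rw [hθ]
    simp only [mul_zero, Real.rpow_zero]
    rw [Finset.sum_const, card_range, nsmul_eq_mul, mul_one]
    have hlog : (K:ℝ) * Real.log 2 ≤ Real.log T := by
      have := Real.log_le_log (by positivity) h2K
      rwa [Real.log_pow] at this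
    have hl2 : (0.6931471803 : ℝ) < Real.log 2 := Real.log_two_gt_d9
    have hK2 : (K:ℝ) ≤ 2 * Real.log T := by nlinarith [Nat.cast_nonneg (α := ℝ) K]
    have hTθ : (0:ℝ) ≤ T ^ (0:ℝ) := by positivity
    push_cast
    nlinarith [Real.log_nonneg hT]
  · set θ : ℝ := 1 - 1/κ with hθdef
    have hκ0 : (0:ℝ) < κ := by linarith
    have hθ0 : 0 < θ := by
      have h2 : 1/κ < 1 := by rw [div_lt_one hκ0]; exact h1
      rw [hθdef]; linarith
    set r : ℝ := (2:ℝ) ^ θ with hrdef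
    have hr1 : 1 < r := Real.one_lt_rpow_iff_of_pos two_pos |>.mpr (Or.inl ⟨one_lt_two, hθ0⟩)
    have hr0 : 0 < r := lt_trans one_pos hr1
    have hr10 : (0:ℝ) < r - 1 := by linarith
    refine ⟨r / (r - 1), div_pos hr0 hr10, ?_⟩
    intro K T hT h2K
    have hterm : ∀ k : ℕ, (2:ℝ) ^ ((k:ℝ) * θ) = r ^ k := by
      intro k
      rw [mul_comm, Real.rpow_mul (by norm_num : (0:ℝ) ≤ 2), Real.rpow_natCast]
    calc ∑ k ∈ range (K+1), (2:ℝ) ^ ((k:ℝ) * θ)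
        = ∑ k ∈ range (K+1), r ^ k := by
          apply Finset.sum_congr rfl; intro k _; exact hterm k
      _ = (r ^ (K+1) - 1) / (r - 1) := geom_sum_eq hr1.ne' _
      _ ≤ r ^ (K+1) / (r - 1) := by
          gcongr
          linarith
      _ = r / (r - 1) * r ^ K := by ring
      _ ≤ r / (r - 1) * T ^ θ := by
          apply mul_le_mul_of_nonneg_left _ (div_pos hr0 hr10).le
          have : r ^ K = ((2:ℝ) ^ K) ^ θ := by
            rw [hrdef, ← Real.rpow_natCast ((2:ℝ)^θ) K, ← Real.rpow_mul (by norm_num : (0:ℝ) ≤ 2),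
              mul_comm, Real.rpow_mul (by norm_num : (0:ℝ) ≤ 2), Real.rpow_natCast]
          rw [this]
          exact Real.rpow_le_rpow (by positivity) h2K hθ0.le
      _ ≤ r / (r - 1) * (T ^ θ + Real.log T + 1) := by
          apply mul_le_mul_of_nonneg_left _ (div_pos hr0 hr10).le
          have := Real.log_nonneg hT
          linarith

theorem sum_minInv_bound (α : ℝ) (κ : ℝ) (hκ : 1 ≤ κ)
    (hdio : ∃ c > 0, ∀ q : ℕ, 0 < q → ∀ p : ℤ, c / (q : ℝ) ^ κ ≤ |(q : ℝ) * α - (p : ℝ)|) :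
    ∃ C > 0, ∀ T M : ℝ, 1 ≤ T → 1 ≤ M →
      ∑ m ∈ Finset.Icc 1 ⌊M * T⌋₊, minInv ((m : ℝ) * α) T
        ≤ C * (M * T ^ (2 - 1 / κ) + M * T * Real.log T) := by
  obtain ⟨c, hc, hdio⟩ := hdio
  have hκ0 : (0:ℝ) < κ := lt_of_lt_of_le one_pos hκ
  obtain ⟨D, hD, hgeom⟩ := geom_aux κ hκ
  set A : ℝ := (2 / c) ^ (1 / κ) with hA
  have hA0 : 0 < A := Real.rpow_pos_of_pos (by positivity) _
  refine ⟨A + 5 + 4 * A * D, by positivity, ?_⟩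
  intro T M hT hM
  have hT0 : (0:ℝ) < T := lt_of_lt_of_le one_pos hT
  set N := ⌊M * T⌋₊ with hN
  set K := ⌊Real.logb 2 T⌋₊ with hK
  have h2K : (2:ℝ) ^ K ≤ T := by
    calc (2:ℝ) ^ K = (2:ℝ) ^ ((K:ℝ)) := (Real.rpow_natCast 2 K).symm
      _ ≤ (2:ℝ) ^ (Real.logb 2 T) :=
          Real.rpow_le_rpow_of_exponent_le one_le_two
            (Nat.floor_le (Real.logb_nonneg one_lt_two hT))
      _ = T := Real.rpow_logb (by norm_num) (by norm_num) hT0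
  -- Step 1: pointwise bound and exchange of sums
  have step1 : ∑ m ∈ Icc 1 N, minInv ((m : ℝ) * α) T
      ≤ T * (((Icc 1 N).filter fun m : ℕ => dni ((m : ℝ) * α) ≤ 1 / T).card : ℝ)
        + ∑ k ∈ range (K + 1), (2:ℝ) ^ (k + 1) *
            (((Icc 1 N).filter fun m : ℕ => dni ((m : ℝ) * α) ≤ ((2:ℝ) ^ k)⁻¹).card : ℝ) := by
    calc ∑ m ∈ Icc 1 N, minInv ((m : ℝ) * α) T
        ≤ ∑ m ∈ Icc 1 N, ((if dni ((m : ℝ) * α) ≤ 1 / T then T else 0)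
            + ∑ k ∈ range (K + 1),
              (if dni ((m : ℝ) * α) ≤ ((2:ℝ) ^ k)⁻¹ then (2:ℝ) ^ (k + 1) else 0)) :=
          Finset.sum_le_sum fun m _ => minInv_pointwise _ _ hT
      _ = (∑ m ∈ Icc 1 N, (if dni ((m : ℝ) * α) ≤ 1 / T then T else 0))
          + ∑ k ∈ range (K + 1), ∑ m ∈ Icc 1 N,
              (if dni ((m : ℝ) * α) ≤ ((2:ℝ) ^ k)⁻¹ then (2:ℝ) ^ (k + 1) else 0) := by
          rw [Finset.sum_add_distrib, Finset.sum_comm]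
      _ = T * (((Icc 1 N).filter fun m : ℕ => dni ((m : ℝ) * α) ≤ 1 / T).card : ℝ)
          + ∑ k ∈ range (K + 1), (2:ℝ) ^ (k + 1) *
            (((Icc 1 N).filter fun m : ℕ => dni ((m : ℝ) * α) ≤ ((2:ℝ) ^ k)⁻¹).card : ℝ) := by
          congr 1
          · rw [← Finset.sum_filter, Finset.sum_const, nsmul_eq_mul, mul_comm]
          · apply Finset.sum_congr rfl
            intro k _
            rw [← Finset.sum_filter, Finset.sum_const, nsmul_eq_mul, mul_comm]
  -- Step 2: apply the counting bound
  have step2 : ∑ m ∈ Icc 1 N, minInv ((m : ℝ) * α) T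
      ≤ T * ((N : ℝ) * (2 * (1 / T) / c) ^ (1 / κ) + 1)
        + ∑ k ∈ range (K + 1), (2:ℝ) ^ (k + 1) *
            ((N : ℝ) * (2 * ((2:ℝ) ^ k)⁻¹ / c) ^ (1 / κ) + 1) := by
    refine le_trans step1 (add_le_add ?_ ?_)
    · exact mul_le_mul_of_nonneg_left
        (count_le c κ α hc hκ hdio N (1 / T) (by positivity)) hT0.le
    · apply Finset.sum_le_sum
      intro k _
      exact mul_le_mul_of_nonneg_left
        (count_le c κ α hc hκ hdio N (((2:ℝ) ^ k)⁻¹) (by positivity)) (by positivity)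
  -- rpow algebra
  have idA : T * ((N : ℝ) * (2 * (1 / T) / c) ^ (1 / κ) + 1)
      = (N : ℝ) * A * T ^ (1 - 1 / κ) + T := by
    have h1 : 2 * (1 / T) / c = (2 / c) * T⁻¹ := by ring
    have h2 : T ^ (1 - 1 / κ) * T ^ (1 / κ) = T := by
      rw [← Real.rpow_add hT0]; norm_num
    have h3 : (0:ℝ) < T ^ (1 / κ) := Real.rpow_pos_of_pos hT0 _
    have h5 : T ^ (1 - 1 / κ) = T * (T ^ (1 / κ))⁻¹ := by
      rw [← div_eq_mul_inv, eq_div_iff h3.ne']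
      exact h2
    rw [h1, Real.mul_rpow (by positivity) (by positivity), Real.inv_rpow hT0.le, ← hA, h5]
    ring
  have idB : ∀ k : ℕ, (2:ℝ) ^ (k + 1) * ((N : ℝ) * (2 * ((2:ℝ) ^ k)⁻¹ / c) ^ (1 / κ) + 1)
      = 2 * (N : ℝ) * A * (2:ℝ) ^ ((k:ℝ) * (1 - 1 / κ)) + (2:ℝ) ^ (k + 1) := by
    intro k
    have hP : ((2:ℝ) ^ k) = (2:ℝ) ^ ((k:ℝ)) := (Real.rpow_natCast 2 k).symm
    have h1 : 2 * ((2:ℝ) ^ k)⁻¹ / c = (2 / c) * ((2:ℝ) ^ k)⁻¹ := by ring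
    have h2 : ((2:ℝ) ^ ((k:ℝ))) ^ (1 / κ) = (2:ℝ) ^ ((k:ℝ) * (1 / κ)) := by
      rw [← Real.rpow_mul (by norm_num : (0:ℝ) ≤ 2)]
    have h3 : (2:ℝ) ^ ((k:ℝ) * (1 - 1 / κ)) * (2:ℝ) ^ ((k:ℝ) * (1 / κ)) = (2:ℝ) ^ ((k:ℝ)) := by
      rw [← Real.rpow_add two_pos]
      congr 1
      ring
    have h4 : (0:ℝ) < (2:ℝ) ^ ((k:ℝ) * (1 / κ)) := Real.rpow_pos_of_pos two_pos _
    have h5 : (2:ℝ) ^ ((k:ℝ) * (1 - 1 / κ)) = (2:ℝ) ^ ((k:ℝ)) * ((2:ℝ) ^ ((k:ℝ) * (1 / κ)))⁻¹ := by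
      rw [← div_eq_mul_inv, eq_div_iff h4.ne']
      exact h3
    rw [h1, Real.mul_rpow (by positivity) (by positivity), Real.inv_rpow (by positivity), hP, h2,
      ← hA, pow_succ, h5, hP]
    ring
  -- sum of plain powers of two
  have hpow2 : ∑ k ∈ range (K + 1), (2:ℝ) ^ (k + 1) ≤ 4 * T := by
    have h : ∑ k ∈ range (K + 1), (2:ℝ) ^ (k + 1) = 2 * ∑ k ∈ range (K + 1), (2:ℝ) ^ k := by
      rw [Finset.mul_sum]
      apply Finset.sum_congr rfl
      intro k _
      rw [pow_succ]
      ring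
    rw [h, geom_sum_eq (by norm_num : (2:ℝ) ≠ 1)]
    have h2 : (2:ℝ) ^ (K + 1) = 2 * 2 ^ K := by ring
    rw [h2]
    norm_num
    nlinarith [h2K]
  -- Step 3: combine
  have step3 : ∑ m ∈ Icc 1 N, minInv ((m : ℝ) * α) T
      ≤ (N : ℝ) * A * T ^ (1 - 1 / κ) + T
        + 2 * (N : ℝ) * A * (D * (T ^ (1 - 1 / κ) + Real.log T + 1)) + 4 * T := by
    refine le_trans step2 ?_
    rw [idA]
    have hsum : ∑ k ∈ range (K + 1), (2:ℝ) ^ (k + 1) *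
          ((N : ℝ) * (2 * ((2:ℝ) ^ k)⁻¹ / c) ^ (1 / κ) + 1)
        = 2 * (N : ℝ) * A * (∑ k ∈ range (K + 1), (2:ℝ) ^ ((k:ℝ) * (1 - 1 / κ)))
          + ∑ k ∈ range (K + 1), (2:ℝ) ^ (k + 1) := by
      rw [Finset.mul_sum, ← Finset.sum_add_distrib]
      apply Finset.sum_congr rfl
      intro k _
      rw [idB k]
    rw [hsum]
    have hg := hgeom K T hT h2K
    have h2NA : (0:ℝ) ≤ 2 * (N : ℝ) * A := by positivity
    have := mul_le_mul_of_nonneg_left hg h2NA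
    linarith [hpow2]
  -- final arithmetic
  set X : ℝ := M * T ^ (2 - 1 / κ) with hX
  set Y : ℝ := M * T * Real.log T with hY
  have hNMT : (N : ℝ) ≤ M * T := Nat.floor_le (by positivity)
  have hTθnn : (0:ℝ) ≤ T ^ (1 - 1 / κ) := by positivity
  have hlognn : (0:ℝ) ≤ Real.log T := Real.log_nonneg hT
  have hTθ : T * T ^ (1 - 1 / κ) = T ^ (2 - 1 / κ) := by
    have he : (2 - 1 / κ) = 1 + (1 - 1 / κ) := by ring
    rw [he, Real.rpow_add hT0, Real.rpow_one]
  have hT1 : T ≤ T ^ (2 - 1 / κ) := by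
    have h1κ : 1 / κ ≤ 1 := by rw [div_le_one hκ0]; exact hκ
    calc T = T ^ (1:ℝ) := (Real.rpow_one T).symm
      _ ≤ T ^ (2 - 1 / κ) := Real.rpow_le_rpow_of_exponent_le hT (by linarith)
  have f1 : (N : ℝ) * T ^ (1 - 1 / κ) ≤ X := by
    calc (N : ℝ) * T ^ (1 - 1 / κ) ≤ (M * T) * T ^ (1 - 1 / κ) :=
          mul_le_mul_of_nonneg_right hNMT hTθnn
      _ = M * (T * T ^ (1 - 1 / κ)) := by ring
      _ = X := by rw [hTθ]
  have f2 : T ≤ X := by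
    calc T ≤ T ^ (2 - 1 / κ) := hT1
      _ = 1 * T ^ (2 - 1 / κ) := by ring
      _ ≤ M * T ^ (2 - 1 / κ) := by
          apply mul_le_mul_of_nonneg_right hM (by positivity)
  have f3 : (N : ℝ) * Real.log T ≤ Y := by
    calc (N : ℝ) * Real.log T ≤ (M * T) * Real.log T :=
          mul_le_mul_of_nonneg_right hNMT hlognn
      _ = Y := rfl
  have f4 : (N : ℝ) ≤ X := by
    calc (N : ℝ) ≤ M * T := hNMT
      _ ≤ M * T ^ (2 - 1 / κ) := mul_le_mul_of_nonneg_left hT1 (by positivity)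
  have hY0 : (0:ℝ) ≤ Y := by
    rw [hY]; positivity
  refine le_trans step3 ?_
  have e1 : A * ((N:ℝ) * T ^ (1 - 1 / κ)) ≤ A * X := mul_le_mul_of_nonneg_left f1 hA0.le
  have e2 : (2*A*D) * ((N:ℝ) * T ^ (1 - 1 / κ)) ≤ (2*A*D) * X :=
    mul_le_mul_of_nonneg_left f1 (by positivity)
  have e3 : (2*A*D) * ((N:ℝ) * Real.log T) ≤ (2*A*D) * Y :=
    mul_le_mul_of_nonneg_left f3 (by positivity)
  have e4 : (2*A*D) * (N:ℝ) ≤ (2*A*D) * X := mul_le_mul_of_nonneg_left f4 (by positivity)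
  have e5 : (A + 5 + 2*A*D) * Y ≥ 0 := mul_nonneg (by positivity) hY0
  nlinarith [e1, e2, e3, e4, e5, f2]
end

section
/- Let α be κ-Diophantine (κ ≥ 1). For any ε > 0 there is a constant C (depending on α, κ, ε) such that for all T ≥ 2, δ ∈ (0,1), and ℓ ≥ 1: Σ_{n=1}^{⌊ℓ/δ⌋} Σ_{m=1}^{⌊T⌋} min(1/‖2nmα‖, T) ≤ C (ℓ/δ)^{1+ε} T^{2−1/κ+ε}, where ‖x‖ denotes distance to the nearest integer. -/
open Finset

open Real in

lemma gap_count (A : ℕ) (S : Finset ℕ) (hS : S ⊆ Finset.Icc 1 A) (g : ℝ) (hg : 0 < g)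
    (hgap : ∀ a ∈ S, ∀ b ∈ S, a < b → g ≤ (b : ℝ) - (a : ℝ)) :
    (S.card : ℝ) ≤ 1 + A / g := by
  by_cases hg1 : g ≤ 1
  · have h1 : (S.card : ℝ) ≤ A := by
      have := Finset.card_le_card hS
      simp [Nat.card_Icc] at this
      exact_mod_cast this
    have : (A : ℝ) ≤ A / g := by
      rw [le_div_iff₀ hg]
      nlinarith [A.cast_nonneg (α := ℝ)]
    linarith
  · push_neg at hg1
    set G : ℕ := ⌈g⌉₊ with hG
    have hG1 : 1 ≤ G := Nat.one_le_ceil_iff.mpr hg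
    have key : ∀ a ∈ S, ∀ b ∈ S, a < b → (a - 1) / G ≠ (b - 1) / G := by
      intro a ha b hb h
      have hgab := hgap a ha b hb h
      have hba : G ≤ b - a := by
        rw [hG, Nat.ceil_le]
        push_cast [Nat.cast_sub h.le]
        linarith
      have ha1 : 1 ≤ a := by
        have := hS ha; simp only [Finset.mem_Icc] at this; exact this.1
      have h1 : a - 1 + G ≤ b - 1 := by omega
      have h2 : (a - 1) / G + 1 ≤ (b - 1) / G := by
        calc (a - 1) / G + 1 = (a - 1 + G) / G := (Nat.add_div_right _ (by omega)).symm
        _ ≤ (b - 1) / G := Nat.div_le_div_right h1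
      omega
    have hcard : S.card ≤ (A - 1) / G + 1 := by
      have hle : S.card ≤ (Finset.range ((A - 1) / G + 1)).card := by
        apply Finset.card_le_card_of_injOn (fun a => (a - 1) / G)
        · intro a ha
          have ha' := hS ha
          simp only [Finset.mem_Icc] at ha'
          simp only [Finset.mem_range]
          have : (a - 1) / G ≤ (A - 1) / G := Nat.div_le_div_right (by omega)
          simp only [Finset.mem_coe, Finset.mem_range]
          omega
        · intro a ha b hb hab
          simp only [Finset.mem_coe] at ha hb
          by_contra hne
          rcases Nat.lt_or_ge a b with h | h2; rotate_left; rcases Nat.lt_or_ge b a with h | h3; rotate_left; · omega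
          · exact key a ha b hb h hab
          · exact key b hb a ha h hab.symm
      simpa using hle
    have h2 : (((A - 1) / G : ℕ) : ℝ) ≤ (A : ℝ) / g := by
      calc (((A - 1) / G : ℕ) : ℝ) ≤ ((A - 1 : ℕ) : ℝ) / (G : ℝ) := Nat.cast_div_le
      _ ≤ (A : ℝ) / g :=
          div_le_div₀ (by positivity) (by exact_mod_cast Nat.sub_le A 1) hg (Nat.le_ceil g)
    calc (S.card : ℝ) ≤ (((A - 1) / G + 1 : ℕ) : ℝ) := by exact_mod_cast hcard
    _ ≤ A / g + 1 := by push_cast; linarith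
    _ = 1 + A / g := by ring

open Real in
lemma dni_lower (α c κ : ℝ) (hc : 0 < c)
    (hα : ∀ q : ℕ, 0 < q → ∀ p : ℤ, c / (q : ℝ) ^ κ ≤ |(q : ℝ) * α - (p : ℝ)|)
    (a : ℕ) (ha : 1 ≤ a) : c / (2 * (a:ℝ)) ^ κ ≤ dni (2 * (a:ℝ) * α) := by
  have := hα (2 * a) (by omega) (round (2 * (a:ℝ) * α))
  rw [dni]
  push_cast at this
  convert this using 3 <;> ring_nf

lemma dni_pos (α c κ : ℝ) (hc : 0 < c)
    (hα : ∀ q : ℕ, 0 < q → ∀ p : ℤ, c / (q : ℝ) ^ κ ≤ |(q : ℝ) * α - (p : ℝ)|)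
    (a : ℕ) (ha : 1 ≤ a) : 0 < dni (2 * (a:ℝ) * α) := by
  refine lt_of_lt_of_le ?_ (dni_lower α c κ hc hα a ha)
  have h2a : (0:ℝ) < 2 * (a:ℝ) := by positivity
  positivity

open Real in
open scoped Classical in
lemma count_lt (α c κ x : ℝ) (hc : 0 < c) (hκ : 1 ≤ κ)
    (hα : ∀ q : ℕ, 0 < q → ∀ p : ℤ, c / (q : ℝ) ^ κ ≤ |(q : ℝ) * α - (p : ℝ)|)
    (hx : 0 < x) (A : ℕ) :
    ((Finset.Icc 1 A).filter (fun a : ℕ => dni (2*(a:ℝ)*α) < x)).card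
      ≤ 1 + (A : ℝ) * (2 * (2*x/c) ^ (1/κ)) := by
  have hκ0 : κ ≠ 0 := by linarith
  have hu : (0:ℝ) < (c/(2*x)) ^ (1/κ) := Real.rpow_pos_of_pos (by positivity) _
  set g : ℝ := (1/2) * (c/(2*x)) ^ (1/κ) with hgdef
  have hg : 0 < g := by positivity
  have hgap : ∀ a ∈ (Finset.Icc 1 A).filter (fun a : ℕ => dni (2*(a:ℝ)*α) < x),
      ∀ b ∈ (Finset.Icc 1 A).filter (fun a : ℕ => dni (2*(a:ℝ)*α) < x),
      a < b → g ≤ (b:ℝ) - (a:ℝ) := by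
    intro a ha b hb hab
    simp only [Finset.mem_filter, Finset.mem_Icc] at ha hb
    set q : ℕ := 2 * (b - a) with hq
    have hq0 : 0 < q := by omega
    have key := hα q hq0 (round (2*(b:ℝ)*α) - round (2*(a:ℝ)*α))
    have hqcast : (q : ℝ) = 2 * ((b:ℝ) - (a:ℝ)) := by
      rw [hq]; push_cast [Nat.cast_sub hab.le]; ring
    have habs : |(q:ℝ) * α - ((round (2*(b:ℝ)*α) - round (2*(a:ℝ)*α) : ℤ) : ℝ)| < 2 * x := by
      have hEq : (q:ℝ) * α - ((round (2*(b:ℝ)*α) - round (2*(a:ℝ)*α) : ℤ) : ℝ)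
          = (2*(b:ℝ)*α - round (2*(b:ℝ)*α)) - (2*(a:ℝ)*α - round (2*(a:ℝ)*α)) := by
        rw [hqcast]; push_cast; ring
      rw [hEq]
      calc |(2*(b:ℝ)*α - round (2*(b:ℝ)*α)) - (2*(a:ℝ)*α - round (2*(a:ℝ)*α))|
          ≤ |2*(b:ℝ)*α - round (2*(b:ℝ)*α)| + |2*(a:ℝ)*α - round (2*(a:ℝ)*α)| :=
            abs_sub _ _
      _ < 2 * x := by
          have h1 : dni (2*(b:ℝ)*α) < x := hb.2
          have h2 : dni (2*(a:ℝ)*α) < x := ha.2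
          rw [dni] at h1 h2
          linarith
    have hlt : c / (2*x) < (q:ℝ) ^ κ := by
      have hqκ : (0:ℝ) < (q:ℝ) ^ κ := Real.rpow_pos_of_pos (by exact_mod_cast hq0) _
      have := lt_of_le_of_lt key habs
      rw [div_lt_iff₀ hqκ] at this
      rw [div_lt_iff₀ (by positivity)]
      linarith [this]
    have hle : (c/(2*x)) ^ (1/κ) ≤ (q:ℝ) := by
      calc (c/(2*x)) ^ (1/κ) ≤ ((q:ℝ) ^ κ) ^ (1/κ) :=
            Real.rpow_le_rpow (by positivity) hlt.le (by positivity)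
      _ = (q:ℝ) ^ (κ * (1/κ)) := (Real.rpow_mul (q.cast_nonneg) _ _).symm
      _ = (q:ℝ) := by rw [mul_one_div_cancel hκ0, Real.rpow_one]
    rw [hqcast] at hle
    rw [hgdef]; linarith
  have hA := gap_count A _ (Finset.filter_subset _ _) g hg hgap
  refine hA.trans ?_
  have hinv : (A:ℝ) / g = (A:ℝ) * (2 * (2*x/c) ^ (1/κ)) := by
    have hid : (c/(2*x)) ^ (1/κ) * ((2*x)/c) ^ (1/κ) = 1 := by
      rw [← Real.mul_rpow (by positivity) (by positivity)]
      rw [show (c/(2*x)) * ((2*x)/c) = 1 by field_simp]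
      exact Real.one_rpow _
    rw [hgdef]
    field_simp
    nlinarith [hid, hu]
  linarith [hinv.le, hinv.ge]


open Real in
open scoped Classical in
lemma moment_bound (α c κ : ℝ) (hc : 0 < c) (hκ : 1 ≤ κ)
    (hα : ∀ q : ℕ, 0 < q → ∀ p : ℤ, c / (q : ℝ) ^ κ ≤ |(q : ℝ) * α - (p : ℝ)|)
    (e : ℝ) (he : 0 < e) :
    ∃ C > 0, ∀ A : ℕ, 1 ≤ A →
      ∑ a ∈ Finset.Icc 1 A, (dni (2*(a:ℝ)*α)) ^ (-(1/κ)) ≤ C * (A:ℝ) ^ ((1:ℝ)+e) := by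
  have hκ0 : κ ≠ 0 := by linarith
  have hκpos : (0:ℝ) < 1/κ := by positivity
  set D : ℝ := 2 * (2/c) ^ (1/κ) with hD
  have hDpos : 0 < D := by positivity
  set E : ℕ := ⌈2 * c ^ (-(1/κ))⌉₊ + 1 with hE
  have hE1 : 1 ≤ E := by omega
  refine ⟨1 + E + D + D * Real.log E + D / e, by
    have : (0:ℝ) ≤ Real.log E := Real.log_nonneg (by exact_mod_cast hE1)
    positivity, ?_⟩
  intro A hA
  set v : ℕ → ℝ := fun a => (dni (2*(a:ℝ)*α)) ^ (-(1/κ)) with hv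
  set K : ℕ := E * A with hK
  have hK1 : 1 ≤ K := Nat.one_le_iff_ne_zero.mpr (by positivity)
  -- upper bound on v
  have hvK : ∀ a ∈ Finset.Icc 1 A, v a ≤ K := by
    intro a ha
    simp only [Finset.mem_Icc] at ha
    have hy := dni_lower α c κ hc hα a ha.1
    have hypos : (0:ℝ) < c / (2*(a:ℝ))^κ := by
      have : (0:ℝ) < 2*(a:ℝ) := by have := ha.1; positivity
      positivity
    have h1 : v a ≤ (c / (2*(a:ℝ))^κ) ^ (-(1/κ)) :=
      Real.rpow_le_rpow_of_nonpos hypos hy (neg_nonpos.mpr hκpos.le)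
    have h2a : (0:ℝ) < 2*(a:ℝ) := by have := ha.1; positivity
    have hpow : ((2*(a:ℝ))^κ) ^ (-(1/κ)) = (2*(a:ℝ))⁻¹ := by
      rw [← Real.rpow_mul h2a.le]
      rw [show κ * -(1/κ) = -1 by field_simp]
      exact Real.rpow_neg_one _
    have h2 : (c / (2*(a:ℝ))^κ) ^ (-(1/κ)) = 2*(a:ℝ) * c ^ (-(1/κ)) := by
      rw [Real.div_rpow hc.le (by positivity), hpow]
      field_simp
    have h3 : 2*(a:ℝ) * c ^ (-(1/κ)) ≤ (K:ℝ) := by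
      have hcs : (0:ℝ) < c ^ (-(1/κ)) := Real.rpow_pos_of_pos hc _
      have hstep : 2 * c ^ (-(1/κ)) ≤ (E:ℝ) := by
        rw [hE]; push_cast
        linarith [Nat.le_ceil (2 * c ^ (-(1/κ)))]
      calc 2*(a:ℝ) * c ^ (-(1/κ)) = (2 * c ^ (-(1/κ))) * (a:ℝ) := by ring
      _ ≤ (E:ℝ) * (A:ℝ) := by
          apply mul_le_mul hstep (by exact_mod_cast ha.2) (by positivity) (by positivity)
      _ = (K:ℝ) := by rw [hK]; push_cast; ring
    calc v a ≤ (c / (2*(a:ℝ))^κ) ^ (-(1/κ)) := h1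
    _ = 2*(a:ℝ) * c ^ (-(1/κ)) := h2
    _ ≤ (K:ℝ) := h3
  -- per-element layer cake
  have hvpos : ∀ a ∈ Finset.Icc 1 A, 0 < v a := by
    intro a ha
    simp only [Finset.mem_Icc] at ha
    exact Real.rpow_pos_of_pos (dni_pos α c κ hc hα a ha.1) _
  have hlayer : ∀ a ∈ Finset.Icc 1 A,
      v a ≤ 1 + (((Finset.Icc 1 K).filter (fun k : ℕ => (k:ℝ) < v a)).card : ℝ) := by
    intro a ha
    rcases le_or_gt (v a) 1 with h | h
    · have : (0:ℝ) ≤ (((Finset.Icc 1 K).filter (fun k : ℕ => (k:ℝ) < v a)).card : ℝ) := by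
        positivity
      linarith
    · set j : ℕ := ⌈v a⌉₊ - 1 with hj
      have hva0 : (0:ℝ) ≤ v a := (hvpos a ha).le
      have hceil2 : 2 ≤ ⌈v a⌉₊ := by
        have h1 : ((1:ℕ):ℝ) < v a := by exact_mod_cast h
        have := Nat.lt_ceil.mpr h1
        omega
      have hsub : Finset.Icc 1 j ⊆ (Finset.Icc 1 K).filter (fun k : ℕ => (k:ℝ) < v a) := by
        intro k hk
        simp only [Finset.mem_Icc] at hk
        have hkj : (k:ℝ) ≤ (j:ℝ) := by exact_mod_cast hk.2
        have hjlt : (j:ℝ) < v a := by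
          have hcl : (⌈v a⌉₊ : ℝ) < v a + 1 := Nat.ceil_lt_add_one hva0
          have : (j:ℝ) = (⌈v a⌉₊ : ℝ) - 1 := by
            rw [hj]; push_cast [Nat.cast_sub (by omega : 1 ≤ ⌈v a⌉₊)]; ring
          linarith
        have hkK : k ≤ K := by
          have hcK : ⌈v a⌉₊ ≤ K := Nat.ceil_le.mpr (hvK a ha)
          omega
        simp only [Finset.mem_filter, Finset.mem_Icc]
        exact ⟨⟨hk.1, hkK⟩, lt_of_le_of_lt hkj hjlt⟩
      have hcard : (j:ℝ) ≤ (((Finset.Icc 1 K).filter (fun k : ℕ => (k:ℝ) < v a)).card : ℝ) := by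
        have := Finset.card_le_card hsub
        simp only [Nat.card_Icc] at this
        exact_mod_cast le_trans (by omega : j ≤ j + 1 - 1) this
      have hjv : v a - 1 ≤ (j:ℝ) := by
        have hcl : v a ≤ (⌈v a⌉₊ : ℝ) := Nat.le_ceil _
        have : (j:ℝ) = (⌈v a⌉₊ : ℝ) - 1 := by
          rw [hj]; push_cast [Nat.cast_sub (by omega : 1 ≤ ⌈v a⌉₊)]; ring
        linarith
      linarith
  -- sum it up and swap
  have hswap : ∑ a ∈ Finset.Icc 1 A, v a ≤ (A:ℝ) + ∑ k ∈ Finset.Icc 1 K,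
      (((Finset.Icc 1 A).filter (fun a : ℕ => (k:ℝ) < v a)).card : ℝ) := by
    calc ∑ a ∈ Finset.Icc 1 A, v a
        ≤ ∑ a ∈ Finset.Icc 1 A,
          (1 + ∑ k ∈ Finset.Icc 1 K, (if (k:ℝ) < v a then (1:ℝ) else 0)) := by
          apply Finset.sum_le_sum
          intro a ha
          have := hlayer a ha
          rwa [Finset.sum_boole]
    _ = (A:ℝ) + ∑ a ∈ Finset.Icc 1 A, ∑ k ∈ Finset.Icc 1 K,
          (if (k:ℝ) < v a then (1:ℝ) else 0) := by
          rw [Finset.sum_add_distrib, Finset.sum_const, Nat.card_Icc]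
          simp
    _ = (A:ℝ) + ∑ k ∈ Finset.Icc 1 K, ∑ a ∈ Finset.Icc 1 A,
          (if (k:ℝ) < v a then (1:ℝ) else 0) := by rw [Finset.sum_comm]
    _ = (A:ℝ) + ∑ k ∈ Finset.Icc 1 K,
          (((Finset.Icc 1 A).filter (fun a : ℕ => (k:ℝ) < v a)).card : ℝ) := by
          congr 1
          apply Finset.sum_congr rfl
          intro k _
          rw [Finset.sum_boole]
  -- bound each count
  have hcount : ∀ k ∈ Finset.Icc 1 K,
      (((Finset.Icc 1 A).filter (fun a : ℕ => (k:ℝ) < v a)).card : ℝ)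
        ≤ 1 + (A:ℝ) * D * (k:ℝ)⁻¹ := by
    intro k hk
    simp only [Finset.mem_Icc] at hk
    have hkpos : (0:ℝ) < (k:ℝ) := by exact_mod_cast hk.1
    have hxpos : (0:ℝ) < (k:ℝ) ^ (-κ) := Real.rpow_pos_of_pos hkpos _
    have hsub : (Finset.Icc 1 A).filter (fun a : ℕ => (k:ℝ) < v a)
        ⊆ (Finset.Icc 1 A).filter (fun a : ℕ => dni (2*(a:ℝ)*α) < (k:ℝ) ^ (-κ)) := by
      intro a ha
      simp only [Finset.mem_filter, Finset.mem_Icc] at ha ⊢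
      refine ⟨ha.1, ?_⟩
      have hy : 0 < dni (2*(a:ℝ)*α) := dni_pos α c κ hc hα a ha.1.1
      have hlt := Real.rpow_lt_rpow_of_neg hkpos ha.2 (by linarith : -κ < 0)
      have hvrw : (v a) ^ (-κ) = dni (2*(a:ℝ)*α) := by
        rw [hv]
        rw [← Real.rpow_mul hy.le]
        rw [show -(1/κ) * -κ = 1 by field_simp]
        exact Real.rpow_one _
      rwa [hvrw] at hlt
    have h1 := Finset.card_le_card hsub
    have h2 := count_lt α c κ ((k:ℝ) ^ (-κ)) hc hκ hα hxpos A
    have h3 : (2 * ((k:ℝ) ^ (-κ)) / c) ^ (1/κ) = (2/c) ^ (1/κ) * (k:ℝ)⁻¹ := by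
      rw [show 2 * ((k:ℝ) ^ (-κ)) / c = (2/c) * ((k:ℝ) ^ (-κ)) by ring]
      rw [Real.mul_rpow (by positivity) (by positivity)]
      congr 1
      rw [← Real.rpow_mul hkpos.le]
      rw [show -κ * (1/κ) = -1 by field_simp]
      exact Real.rpow_neg_one _
    calc (((Finset.Icc 1 A).filter (fun a : ℕ => (k:ℝ) < v a)).card : ℝ)
        ≤ (((Finset.Icc 1 A).filter
            (fun a : ℕ => dni (2*(a:ℝ)*α) < (k:ℝ) ^ (-κ))).card : ℝ) := by exact_mod_cast h1
    _ ≤ 1 + (A:ℝ) * (2 * (2 * ((k:ℝ) ^ (-κ)) / c) ^ (1/κ)) := h2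
    _ = 1 + (A:ℝ) * D * (k:ℝ)⁻¹ := by rw [h3, hD]; ring
  -- harmonic sum
  have hharm : ∑ k ∈ Finset.Icc 1 K, ((k:ℝ))⁻¹ ≤ 1 + Real.log K := by
    have : ∑ k ∈ Finset.Icc 1 K, ((k:ℝ))⁻¹ = ((harmonic K : ℚ) : ℝ) := by
      rw [harmonic_eq_sum_Icc]
      push_cast
      rfl
    rw [this]
    exact harmonic_le_one_add_log K
  have hsum2 : ∑ k ∈ Finset.Icc 1 K,
      (((Finset.Icc 1 A).filter (fun a : ℕ => (k:ℝ) < v a)).card : ℝ)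
      ≤ (K:ℝ) + (A:ℝ) * D * (1 + Real.log K) := by
    calc ∑ k ∈ Finset.Icc 1 K,
        (((Finset.Icc 1 A).filter (fun a : ℕ => (k:ℝ) < v a)).card : ℝ)
        ≤ ∑ k ∈ Finset.Icc 1 K, (1 + (A:ℝ) * D * (k:ℝ)⁻¹) := Finset.sum_le_sum hcount
    _ = (K:ℝ) + (A:ℝ) * D * ∑ k ∈ Finset.Icc 1 K, ((k:ℝ))⁻¹ := by
        rw [Finset.sum_add_distrib, Finset.sum_const, Nat.card_Icc, ← Finset.mul_sum]
        simp
    _ ≤ (K:ℝ) + (A:ℝ) * D * (1 + Real.log K) := by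
        have hAD : (0:ℝ) ≤ (A:ℝ) * D := by positivity
        nlinarith [hharm]
  -- assemble
  have hlogK : Real.log K = Real.log E + Real.log A := by
    rw [hK]
    push_cast
    exact Real.log_mul (by positivity) (by positivity)
  have hA1 : (1:ℝ) ≤ (A:ℝ) := by exact_mod_cast hA
  have hApow : (A:ℝ) ≤ (A:ℝ) ^ ((1:ℝ)+e) := by
    calc (A:ℝ) = (A:ℝ) ^ (1:ℝ) := (Real.rpow_one _).symm
    _ ≤ (A:ℝ) ^ ((1:ℝ)+e) := Real.rpow_le_rpow_of_exponent_le hA1 (by linarith)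
  have hlogA : (A:ℝ) * Real.log A ≤ (A:ℝ) ^ ((1:ℝ)+e) / e := by
    have hl := Real.log_le_rpow_div (by positivity : (0:ℝ) ≤ (A:ℝ)) he
    calc (A:ℝ) * Real.log A ≤ (A:ℝ) * ((A:ℝ) ^ e / e) := by
          apply mul_le_mul_of_nonneg_left hl (by positivity)
    _ = (A:ℝ) ^ ((1:ℝ)+e) / e := by
        rw [Real.rpow_add (by positivity : (0:ℝ) < (A:ℝ)), Real.rpow_one]
        ring
  have hKA : (K:ℝ) = (E:ℝ) * (A:ℝ) := by rw [hK]; push_cast; ring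
  have hlogE : (0:ℝ) ≤ Real.log E := Real.log_nonneg (by exact_mod_cast hE1)
  have hAe : (0:ℝ) < (A:ℝ) ^ ((1:ℝ)+e) := by positivity
  calc ∑ a ∈ Finset.Icc 1 A, v a
      ≤ (A:ℝ) + ((K:ℝ) + (A:ℝ) * D * (1 + Real.log K)) := by linarith [hswap, hsum2]
  _ = (A:ℝ) * (1 + (E:ℝ) + D + D * Real.log E) + D * ((A:ℝ) * Real.log A) := by
      rw [hlogK, hKA]; ring
  _ ≤ (A:ℝ) ^ ((1:ℝ)+e) * (1 + (E:ℝ) + D + D * Real.log E)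
        + D * ((A:ℝ) ^ ((1:ℝ)+e) / e) := by
      have hc1 : (0:ℝ) ≤ 1 + (E:ℝ) + D + D * Real.log E := by positivity
      have t1 : (A:ℝ) * (1 + (E:ℝ) + D + D * Real.log E)
          ≤ (A:ℝ) ^ ((1:ℝ)+e) * (1 + (E:ℝ) + D + D * Real.log E) :=
        mul_le_mul_of_nonneg_right hApow hc1
      have t2 : D * ((A:ℝ) * Real.log A) ≤ D * ((A:ℝ) ^ ((1:ℝ)+e) / e) :=
        mul_le_mul_of_nonneg_left hlogA hDpos.le
      linarith
  _ = (1 + (E:ℝ) + D + D * Real.log E + D / e) * (A:ℝ) ^ ((1:ℝ)+e) := by ring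

open Real in
lemma divisor_bound (e : ℝ) (he : 0 < e) :
    ∃ C ≥ 1, ∀ a : ℕ, 1 ≤ a → (a.divisors.card : ℝ) ≤ C * (a:ℝ) ^ e := by
  set r : ℝ := (2:ℝ) ^ e with hr
  have hr1 : 1 < r := Real.one_lt_rpow_iff_of_pos (by norm_num) |>.mpr (Or.inl ⟨by norm_num, he⟩)
  set M : ℝ := max 1 (1/(r-1)) with hM
  have hM1 : (1:ℝ) ≤ M := le_max_left _ _
  have hMr : 1 ≤ M * (r - 1) := by
    rcases le_or_gt (1/(r-1)) 1 with h | h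
    · have : M = 1 := by rw [hM, max_eq_left h]
      rw [this, one_mul]
      rw [div_le_one (by linarith)] at h
      linarith
    · have : M = 1/(r-1) := by rw [hM, max_eq_right h.le]
      rw [this]
      rw [div_mul_eq_mul_div, mul_comm]
      rw [le_div_iff₀ (by linarith)]
      linarith
  set B : ℝ := (2:ℝ) ^ (1/e) with hB
  refine ⟨M ^ (⌈B⌉₊), one_le_pow₀ hM1, ?_⟩
  intro a ha
  classical
  have hane : a ≠ 0 := by omega
  have hfact := Nat.card_divisors hane
  have haprod : (a:ℝ) = ∏ p ∈ a.primeFactors, ((p:ℝ) ^ (a.factorization p)) := by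
    conv_lhs => rw [← Nat.factorization_prod_pow_eq_self hane]
    rw [Nat.prod_factorization_eq_prod_primeFactors]
    push_cast
    rfl
  have hae : (a:ℝ) ^ e = ∏ p ∈ a.primeFactors, (((p:ℝ) ^ (a.factorization p)) ^ e) := by
    rw [haprod]
    exact (Real.finset_prod_rpow _ _ (fun p _ => by positivity) e).symm
  have hkey : ∀ p ∈ a.primeFactors,
      ((a.factorization p : ℝ) + 1)
        ≤ (if (p:ℝ) < B then M else 1) * (((p:ℝ) ^ (a.factorization p)) ^ e) := by
    intro p hp
    have hprime := Nat.prime_of_mem_primeFactors hp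
    have hp2 : 2 ≤ p := hprime.two_le
    have hp2R : (2:ℝ) ≤ (p:ℝ) := by exact_mod_cast hp2
    set n : ℕ := a.factorization p with hn
    have hbase : ((p:ℝ) ^ n) ^ e = ((p:ℝ) ^ e) ^ n := by
      rw [← Real.rpow_natCast (p:ℝ) n, ← Real.rpow_mul (by positivity), mul_comm,
        Real.rpow_mul (by positivity), Real.rpow_natCast]
    set t : ℝ := (p:ℝ) ^ e with htdef
    have ht0 : 0 < t := Real.rpow_pos_of_pos (by positivity) _
    have htr : r ≤ t := Real.rpow_le_rpow (by norm_num) hp2R he.le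
    have hn2 : (n:ℝ) + 1 ≤ (2:ℝ) ^ n := by
      have := Nat.lt_two_pow_self (n := n)
      have h2 : n + 1 ≤ 2 ^ n := this
      exact_mod_cast h2
    rw [hbase]
    split_ifs with hpB
    · -- small prime
      have hrn : (1:ℝ) + n * (r - 1) ≤ r ^ n := by
        have h' := one_add_mul_le_pow (show (-2:ℝ) ≤ r - 1 by linarith) n
        rw [show (1:ℝ) + (r - 1) = r from by ring] at h'
        exact h'
      have htn : r ^ n ≤ t ^ n := pow_le_pow_left₀ (by linarith) htr n
      have hMn : (0:ℝ) ≤ (n:ℝ) := by positivity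
      nlinarith [hM1, hMr, hMn]
    · -- large prime
      push_neg at hpB
      have hBe : (2:ℝ) ≤ B ^ e := by
        rw [hB, ← Real.rpow_mul (by norm_num), one_div_mul_cancel (by linarith : e ≠ 0),
          Real.rpow_one]
      have htB : B ^ e ≤ t := Real.rpow_le_rpow (by positivity) hpB he.le
      have h2n : (2:ℝ) ^ n ≤ t ^ n := pow_le_pow_left₀ (by norm_num) (by linarith) n
      rw [one_mul]
      linarith
  have hdiv : (a.divisors.card : ℝ) = ∏ p ∈ a.primeFactors, ((a.factorization p : ℝ) + 1) := by
    rw [hfact]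
    push_cast
    rfl
  have hW : ∏ p ∈ a.primeFactors, (if (p:ℝ) < B then M else 1) ≤ M ^ (⌈B⌉₊) := by
    rw [← Finset.prod_filter (fun p : ℕ => (p:ℝ) < B) (fun _ => M), Finset.prod_const]
    have hcard : (a.primeFactors.filter (fun p : ℕ => (p:ℝ) < B)).card ≤ ⌈B⌉₊ := by
      have hsub : a.primeFactors.filter (fun p : ℕ => (p:ℝ) < B) ⊆ Finset.range ⌈B⌉₊ := by
        intro p hp
        simp only [Finset.mem_filter] at hp
        simp only [Finset.mem_range]
        have : (p:ℝ) < (⌈B⌉₊ : ℝ) := lt_of_lt_of_le hp.2 (Nat.le_ceil B)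
        exact_mod_cast this
      calc (a.primeFactors.filter (fun p : ℕ => (p:ℝ) < B)).card
          ≤ (Finset.range ⌈B⌉₊).card := Finset.card_le_card hsub
      _ = ⌈B⌉₊ := Finset.card_range _
    exact pow_le_pow_right₀ hM1 hcard
  calc (a.divisors.card : ℝ)
      = ∏ p ∈ a.primeFactors, ((a.factorization p : ℝ) + 1) := hdiv
  _ ≤ ∏ p ∈ a.primeFactors,
        ((if (p:ℝ) < B then M else 1) * (((p:ℝ) ^ (a.factorization p)) ^ e)) :=
      Finset.prod_le_prod (fun p _ => by positivity) hkey
  _ = (∏ p ∈ a.primeFactors, (if (p:ℝ) < B then M else 1))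
        * ∏ p ∈ a.primeFactors, (((p:ℝ) ^ (a.factorization p)) ^ e) :=
      Finset.prod_mul_distrib
  _ ≤ M ^ (⌈B⌉₊) * (a:ℝ) ^ e := by
      rw [← hae]
      apply mul_le_mul_of_nonneg_right hW (by positivity)

open Real in
open scoped Classical in
lemma collapse (N M : ℕ) (g : ℕ → ℝ) (hg : ∀ a, 0 ≤ g a) :
    ∑ n ∈ Finset.Icc 1 N, ∑ m ∈ Finset.Icc 1 M, g (n*m)
      ≤ ∑ a ∈ Finset.Icc 1 (N*M), (a.divisors.card : ℝ) * g a := by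
  rw [← Finset.sum_product']
  rw [Finset.sum_comp (s := Finset.Icc 1 N ×ˢ Finset.Icc 1 M) g (fun p => p.1 * p.2)]
  have himg : (Finset.Icc 1 N ×ˢ Finset.Icc 1 M).image (fun p => p.1 * p.2)
      ⊆ Finset.Icc 1 (N*M) := by
    intro b hb
    simp only [Finset.mem_image, Finset.mem_product, Finset.mem_Icc] at hb
    obtain ⟨p, ⟨⟨h1, h2⟩, ⟨h3, h4⟩⟩, rfl⟩ := hb
    simp only [Finset.mem_Icc]
    exact ⟨Nat.one_le_iff_ne_zero.mpr (by positivity), Nat.mul_le_mul h2 h4⟩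
  calc ∑ b ∈ (Finset.Icc 1 N ×ˢ Finset.Icc 1 M).image (fun p => p.1 * p.2),
        ((Finset.Icc 1 N ×ˢ Finset.Icc 1 M).filter (fun p => p.1 * p.2 = b)).card • g b
      ≤ ∑ b ∈ (Finset.Icc 1 N ×ˢ Finset.Icc 1 M).image (fun p => p.1 * p.2),
        (b.divisors.card : ℝ) * g b := by
        apply Finset.sum_le_sum
        intro b hb
        rw [nsmul_eq_mul]
        apply mul_le_mul_of_nonneg_right _ (hg b)
        have hb1 : 1 ≤ b := by
          have := himg hb
          simp only [Finset.mem_Icc] at this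
          exact this.1
        have : ((Finset.Icc 1 N ×ˢ Finset.Icc 1 M).filter (fun p => p.1 * p.2 = b)).card
            ≤ b.divisors.card := by
          apply Finset.card_le_card_of_injOn (fun p => p.1)
          · intro p hp
            simp only [Finset.mem_coe, Finset.mem_filter, Finset.mem_product, Finset.mem_Icc] at hp
            rw [Finset.mem_coe, Nat.mem_divisors]
            exact ⟨⟨p.2, hp.2.symm⟩, by omega⟩
          · intro p hp q hq hpq
            simp only [Finset.mem_coe, Finset.mem_filter, Finset.mem_product,
              Finset.mem_Icc] at hp hq
            simp only at hpq
            have hp1 : 0 < p.1 := hp.1.1.1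
            have : p.1 * p.2 = p.1 * q.2 := by rw [hp.2, hpq, hq.2]
            have h2 : p.2 = q.2 := Nat.eq_of_mul_eq_mul_left hp1 this
            exact Prod.ext hpq h2
        exact_mod_cast this
  _ ≤ ∑ a ∈ Finset.Icc 1 (N*M), (a.divisors.card : ℝ) * g a := by
      apply Finset.sum_le_sum_of_subset_of_nonneg himg
      intro a _ _
      have := hg a
      positivity

lemma min_interp (y T s : ℝ) (hy : 0 < y) (hT : 0 < T) (hs : 0 ≤ s) (hs1 : s ≤ 1) :
    min (1/y) T ≤ y ^ (-s) * T ^ ((1:ℝ)-s) := by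
  have hm : 0 < min (1/y) T := lt_min (by positivity) hT
  have h1 : min (1/y) T = (min (1/y) T) ^ s * (min (1/y) T) ^ ((1:ℝ)-s) := by
    rw [← Real.rpow_add hm]; norm_num
  rw [h1]
  apply mul_le_mul _ (Real.rpow_le_rpow hm.le (min_le_right _ _) (by linarith))
    (by positivity) (by positivity)
  calc (min (1/y) T) ^ s ≤ (1/y) ^ s := Real.rpow_le_rpow hm.le (min_le_left _ _) hs
  _ = y ^ (-s) := by
      rw [one_div, ← Real.rpow_neg_one y, ← Real.rpow_mul hy.le]
      norm_num

open Real in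
theorem double_sum_bound (α : ℝ) (κ : ℝ) (hκ : 1 ≤ κ)
    (hdio : ∃ c > 0, ∀ q : ℕ, 0 < q → ∀ p : ℤ, c / (q : ℝ) ^ κ ≤ |(q : ℝ) * α - (p : ℝ)|)
    (ε : ℝ) (hε : 0 < ε) :
    ∃ C > 0, ∀ T δ ℓ : ℝ, 2 ≤ T → 0 < δ → δ < 1 → 1 ≤ ℓ →
      ∑ n ∈ Finset.Icc 1 ⌊ℓ / δ⌋₊, ∑ m ∈ Finset.Icc 1 ⌊T⌋₊,
          minInv (2 * (n : ℝ) * (m : ℝ) * α) T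
        ≤ C * (ℓ / δ) ^ (1 + ε) * T ^ (2 - 1 / κ + ε) := by
  
  obtain ⟨c, hc, hα⟩ := hdio
  obtain ⟨C₂, hC₂pos, hmom⟩ := moment_bound α c κ hc hκ hα (ε/2) (by positivity)
  obtain ⟨C₁, hC₁1, hdivb⟩ := divisor_bound (ε/2) (by positivity)
  have hC₁0 : (0:ℝ) < C₁ := lt_of_lt_of_le one_pos hC₁1
  refine ⟨C₁ * C₂, by positivity, ?_⟩
  intro T δ ℓ hT hδ hδ1 hℓ
  have hκ0 : κ ≠ 0 := by linarith
  have hs0 : (0:ℝ) ≤ 1/κ := by positivity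
  have hs1 : (1:ℝ)/κ ≤ 1 := by
    rw [div_le_one (by linarith)]; exact hκ
  have hT0 : (0:ℝ) < T := by linarith
  have hℓδ : (1:ℝ) ≤ ℓ/δ := by
    rw [le_div_iff₀ hδ]; nlinarith
  have hℓδ0 : (0:ℝ) < ℓ/δ := by linarith
  set N : ℕ := ⌊ℓ / δ⌋₊ with hN
  set M : ℕ := ⌊T⌋₊ with hM
  have hN1 : 1 ≤ N := Nat.le_floor (by exact_mod_cast hℓδ)
  have hM1 : 1 ≤ M := Nat.le_floor (by exact_mod_cast (by linarith : (1:ℝ) ≤ T))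
  set A : ℕ := N * M with hA
  have hA1 : 1 ≤ A := Nat.one_le_iff_ne_zero.mpr (by positivity)
  have hA0 : (0:ℝ) < (A:ℝ) := by exact_mod_cast hA1
  set v : ℕ → ℝ := fun a => (dni (2*(a:ℝ)*α)) ^ (-(1/κ)) with hv
  have hv0 : ∀ a, 0 ≤ v a := fun a => Real.rpow_nonneg (abs_nonneg _) _
  -- step 1: pointwise interpolation
  have step1 : ∑ n ∈ Finset.Icc 1 N, ∑ m ∈ Finset.Icc 1 M, minInv (2*(n:ℝ)*(m:ℝ)*α) T
      ≤ T ^ ((1:ℝ)-1/κ) * ∑ n ∈ Finset.Icc 1 N, ∑ m ∈ Finset.Icc 1 M, v (n*m) := by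
    rw [Finset.mul_sum]
    apply Finset.sum_le_sum
    intro n hn
    rw [Finset.mul_sum]
    apply Finset.sum_le_sum
    intro m hm
    simp only [Finset.mem_Icc] at hn hm
    have hcast : 2*(n:ℝ)*(m:ℝ)*α = 2*((n*m : ℕ):ℝ)*α := by push_cast; ring
    have hy : 0 < dni (2*((n*m : ℕ):ℝ)*α) :=
      dni_pos α c κ hc hα (n*m) (Nat.one_le_iff_ne_zero.mpr (Nat.mul_ne_zero (by omega) (by omega)))
    rw [minInv, hcast, if_neg hy.ne']
    calc min (1 / dni (2*((n*m : ℕ):ℝ)*α)) T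
        ≤ (dni (2*((n*m : ℕ):ℝ)*α)) ^ (-(1/κ)) * T ^ ((1:ℝ)-1/κ) :=
          min_interp _ T (1/κ) hy hT0 hs0 hs1
    _ = T ^ ((1:ℝ)-1/κ) * v (n*m) := by rw [hv]; ring
  -- step 2: collapse + divisor bound + moment
  have step2 : ∑ n ∈ Finset.Icc 1 N, ∑ m ∈ Finset.Icc 1 M, v (n*m)
      ≤ C₁ * C₂ * (A:ℝ) ^ ((1:ℝ)+ε) := by
    calc ∑ n ∈ Finset.Icc 1 N, ∑ m ∈ Finset.Icc 1 M, v (n*m)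
        ≤ ∑ a ∈ Finset.Icc 1 A, (a.divisors.card : ℝ) * v a := collapse N M v hv0
    _ ≤ ∑ a ∈ Finset.Icc 1 A, (C₁ * (A:ℝ) ^ (ε/2)) * v a := by
        apply Finset.sum_le_sum
        intro a ha
        simp only [Finset.mem_Icc] at ha
        apply mul_le_mul_of_nonneg_right _ (hv0 a)
        calc (a.divisors.card : ℝ) ≤ C₁ * (a:ℝ) ^ (ε/2) := hdivb a ha.1
        _ ≤ C₁ * (A:ℝ) ^ (ε/2) := by
            apply mul_le_mul_of_nonneg_left _ hC₁0.le
            apply Real.rpow_le_rpow (by positivity) (by exact_mod_cast ha.2) (by positivity)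
    _ = C₁ * (A:ℝ) ^ (ε/2) * ∑ a ∈ Finset.Icc 1 A, v a := by rw [← Finset.mul_sum]
    _ ≤ C₁ * (A:ℝ) ^ (ε/2) * (C₂ * (A:ℝ) ^ ((1:ℝ)+ε/2)) := by
        apply mul_le_mul_of_nonneg_left (hmom A hA1) (by positivity)
    _ = C₁ * C₂ * (A:ℝ) ^ ((1:ℝ)+ε) := by
        rw [show C₁ * (A:ℝ) ^ (ε/2) * (C₂ * (A:ℝ) ^ ((1:ℝ)+ε/2))
            = C₁ * C₂ * ((A:ℝ) ^ (ε/2) * (A:ℝ) ^ ((1:ℝ)+ε/2)) from by ring,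
          ← Real.rpow_add hA0, show ε/2 + ((1:ℝ)+ε/2) = 1+ε from by ring]
  -- step 3: A ≤ (ℓ/δ) * T
  have hAle : (A:ℝ) ≤ (ℓ/δ) * T := by
    have h1 : (N:ℝ) ≤ ℓ/δ := Nat.floor_le (by positivity)
    have h2 : (M:ℝ) ≤ T := Nat.floor_le (by positivity)
    calc (A:ℝ) = (N:ℝ) * (M:ℝ) := by rw [hA]; push_cast; ring
    _ ≤ (ℓ/δ) * T := mul_le_mul h1 h2 (by positivity) (by positivity)
  have hApow : (A:ℝ) ^ ((1:ℝ)+ε) ≤ (ℓ/δ) ^ ((1:ℝ)+ε) * T ^ ((1:ℝ)+ε) := by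
    calc (A:ℝ) ^ ((1:ℝ)+ε) ≤ ((ℓ/δ) * T) ^ ((1:ℝ)+ε) :=
          Real.rpow_le_rpow (by positivity) hAle (by positivity)
    _ = (ℓ/δ) ^ ((1:ℝ)+ε) * T ^ ((1:ℝ)+ε) := Real.mul_rpow (by positivity) (by positivity)
  -- final
  calc ∑ n ∈ Finset.Icc 1 N, ∑ m ∈ Finset.Icc 1 M, minInv (2*(n:ℝ)*(m:ℝ)*α) T
      ≤ T ^ ((1:ℝ)-1/κ) * (C₁ * C₂ * (A:ℝ) ^ ((1:ℝ)+ε)) := by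
        refine step1.trans ?_
        apply mul_le_mul_of_nonneg_left step2 (by positivity)
  _ ≤ T ^ ((1:ℝ)-1/κ) * (C₁ * C₂ * ((ℓ/δ) ^ ((1:ℝ)+ε) * T ^ ((1:ℝ)+ε))) := by
        apply mul_le_mul_of_nonneg_left _ (by positivity)
        apply mul_le_mul_of_nonneg_left hApow (by positivity)
  _ = C₁ * C₂ * (ℓ/δ) ^ (1+ε) * (T ^ ((1:ℝ)-1/κ) * T ^ ((1:ℝ)+ε)) := by ring
  _ = C₁ * C₂ * (ℓ/δ) ^ (1+ε) * T ^ (2 - 1/κ + ε) := by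
        rw [← Real.rpow_add hT0, show (1:ℝ)-1/κ+((1:ℝ)+ε) = 2-1/κ+ε from by ring]
end
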